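/- arXiv:1012.4266 — 4 statements merged into one kernel-verified Lean document; each statement's English description precedes it below -/
import Mathlib

section
/- Let κ > 0 and for each natural number ℓ define the matrix T_ℓ(κ) by entries (T_ℓ(κ))_{m,n} = (1+κ²)^{-1/2} (1+κ²)^{-n/2} (1+κ^{-2})^{-(ℓ-n)/2} √C(ℓ,n) if m = ℓ - n with 0 ≤ n ≤ ℓ, and 0 otherwise. Then the adjoint (conjugate transpose) satisfies T_ℓ(κ)† = κ^{-1} · T_ℓ(κ^{-1}) for every ℓ. -/
/-- Kraus operators of the quantum-limited phase conjugation channel `D(κ)`: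
entries of the infinite matrix `T_ℓ(κ)` in the Fock basis. -/
noncomputable def Tmat (κ : ℝ) (ℓ m n : ℕ) : ℝ :=
  if n ≤ ℓ ∧ m = ℓ - n then
    (Real.sqrt (1 + κ ^ 2))⁻¹ * ((Real.sqrt (1 + κ ^ 2))⁻¹) ^ n *
      ((Real.sqrt (1 + (κ⁻¹) ^ 2))⁻¹) ^ (ℓ - n) * Real.sqrt (ℓ.choose n)
  else 0

lemma key (κ : ℝ) (hκ : 0 < κ) :
    (Real.sqrt (1 + κ ^ 2))⁻¹ = κ⁻¹ * (Real.sqrt (1 + (κ⁻¹) ^ 2))⁻¹ := by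
  have h1 : Real.sqrt (1 + κ ^ 2) = κ * Real.sqrt (1 + (κ⁻¹) ^ 2) := by
    rw [← Real.sqrt_sq hκ.le, ← Real.sqrt_mul (by positivity)]
    congr 1
    field_simp
    rw [Real.sqrt_sq hκ.le]
    ring
  rw [h1, mul_inv]

/-- Duality of the phase conjugation channels: the adjoint (conjugate transpose; the
entries are real so this is the transpose) satisfies `T_ℓ(κ)† = κ⁻¹ • T_ℓ(κ⁻¹)`. -/
theorem stmt_4 (κ : ℝ) (hκ : 0 < κ) (ℓ m n : ℕ) :
    Tmat κ ℓ n m = κ⁻¹ * Tmat κ⁻¹ ℓ m n := by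
  unfold Tmat
  by_cases h : n ≤ ℓ ∧ m = ℓ - n
  · obtain ⟨hn, hm⟩ := h
    have hmℓ : m ≤ ℓ := hm ▸ Nat.sub_le ℓ n
    have hnm : n = ℓ - m := by omega
    rw [if_pos ⟨hmℓ, hnm⟩, if_pos ⟨hn, hm⟩, inv_inv]
    have hc : (ℓ.choose m : ℝ) = (ℓ.choose n : ℝ) := by
      rw [hnm, Nat.choose_symm hmℓ]
    rw [hc, key κ hκ, ← hm, ← hnm]
    ring
  · have h' : ¬ (m ≤ ℓ ∧ n = ℓ - m) := by omega
    rw [if_neg h', if_neg h, mul_zero]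
end

section
/- For natural numbers n ≥ 1 and δ ≥ 0, the n × n matrix H with entries H_{ij} = (i + j + δ)! for 0 ≤ i, j ≤ n-1 is invertible; indeed det H = ∏_{k=0}^{n-1} k! · (k+δ)!. -/
open Finset

lemma hankel_factorial_det : ∀ (n δ : ℕ),
    (Matrix.of fun i j : Fin n => ((((i : ℕ) + (j : ℕ) + δ).factorial : ℝ))).det =
      (∏ k ∈ Finset.range n, (k.factorial : ℝ) * ((k + δ).factorial : ℝ)) := by
  intro n
  induction n with
  | zero => intro δ; simp [Matrix.det_fin_zero]
  | succ n ih =>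
    intro δ
    set A : Matrix (Fin (n+1)) (Fin (n+1)) ℝ :=
      Matrix.of fun i j : Fin (n+1) => ((((i : ℕ) + (j : ℕ) + δ).factorial : ℝ)) with hA
    set B : Matrix (Fin (n+1)) (Fin (n+1)) ℝ :=
      Matrix.of fun i j : Fin (n+1) =>
        if (j : ℕ) = 0 then ((((i : ℕ) + δ).factorial : ℝ))
        else ((i : ℕ) : ℝ) * ((((i : ℕ) + ((j : ℕ) - 1) + δ).factorial : ℝ)) with hB
    have hAB : A.det = B.det := by
      apply Matrix.det_eq_of_forall_col_eq_smul_add_pred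
        (c := fun j : Fin n => (((j : ℕ) + 1 + δ : ℕ) : ℝ))
      · intro i
        simp [hA, hB]
      · intro i j
        have h1 : ((j.succ : Fin (n+1)) : ℕ) = (j : ℕ) + 1 := rfl
        have h2 : ((j.castSucc : Fin (n+1)) : ℕ) = (j : ℕ) := rfl
        simp only [hA, hB, Matrix.of_apply, h1, h2]
        rw [if_neg (by omega)]
        have h3 : (j : ℕ) + 1 - 1 = (j : ℕ) := by omega
        rw [h3]
        have h4 : (i : ℕ) + ((j : ℕ) + 1) + δ = ((i : ℕ) + (j : ℕ) + δ) + 1 := by omega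
        rw [h4, Nat.factorial_succ]
        push_cast
        ring
    rw [hAB, Matrix.det_succ_row_zero]
    have hB0 : ∀ j : Fin (n+1), j ≠ 0 → B 0 j = 0 := by
      intro j hj
      have : (j : ℕ) ≠ 0 := fun h => hj (Fin.ext h)
      simp [hB, this, hj]
    rw [Finset.sum_eq_single 0]
    rotate_left
    · intro j _ hj
      rw [hB0 j hj]; ring
    · intro h; exact absurd (Finset.mem_univ _) h
    have hB00 : B 0 0 = ((δ.factorial : ℝ)) := by simp [hB]
    rw [hB00, Fin.succAbove_zero]
    have hsub : (B.submatrix Fin.succ Fin.succ) =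
        Matrix.of (fun i j : Fin n => (((i : ℕ) + 1 : ℕ) : ℝ) *
          ((((i : ℕ) + (j : ℕ) + (δ + 1)).factorial : ℝ))) := by
      ext i j
      have h1 : ((i.succ : Fin (n+1)) : ℕ) = (i : ℕ) + 1 := rfl
      have h2 : ((j.succ : Fin (n+1)) : ℕ) = (j : ℕ) + 1 := rfl
      simp only [Matrix.submatrix_apply, hB, Matrix.of_apply, h1, h2]
      rw [if_neg (by omega)]
      have h3 : (j : ℕ) + 1 - 1 = (j : ℕ) := by omega
      have h4 : (i : ℕ) + 1 + (j : ℕ) + δ = (i : ℕ) + (j : ℕ) + (δ + 1) := by omega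
      rw [h3, h4]
    rw [hsub, Matrix.det_mul_column (fun i : Fin n => (((i : ℕ) + 1 : ℕ) : ℝ))
      (fun i j : Fin n => ((((i : ℕ) + (j : ℕ) + (δ + 1)).factorial : ℝ)))]
    rw [show (Matrix.det fun i j : Fin n => ((((i : ℕ) + (j : ℕ) + (δ + 1)).factorial : ℝ))) = _
      from ih (δ + 1)]
    have hprod : (∏ i : Fin n, (((i : ℕ) + 1 : ℕ) : ℝ)) = ((n.factorial : ℕ) : ℝ) := by
      rw [Fin.prod_univ_eq_prod_range (fun k => (((k : ℕ) + 1 : ℕ) : ℝ))]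
      rw [← Nat.cast_prod]
      rw [Finset.prod_range_add_one_eq_factorial]
    rw [hprod]
    rw [Finset.prod_mul_distrib, Finset.prod_mul_distrib,
      Finset.prod_range_succ (fun k => ((k.factorial : ℕ) : ℝ)),
      Finset.prod_range_succ' (fun k => (((k + δ).factorial : ℕ) : ℝ))]
    simp only [zero_add]
    have : ∀ k, (k + 1 + δ) = (k + (δ + 1)) := by intro k; omega
    simp only [this]
    have h0 : ((0 : Fin (n+1)) : ℕ) = 0 := rfl
    rw [h0, pow_zero]
    push_cast
    ring

/-- The Hankel matrix of factorials `H_{ij} = (i+j+δ)!`, `0 ≤ i,j ≤ n-1`, is invertible,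
with `det H = ∏_{k=0}^{n-1} k! (k+δ)!`. -/
theorem stmt_13 (n δ : ℕ) (hn : 1 ≤ n) :
    (Matrix.of fun i j : Fin n => ((((i : ℕ) + (j : ℕ) + δ).factorial : ℝ))).det =
        (∏ k ∈ Finset.range n, (k.factorial : ℝ) * ((k + δ).factorial : ℝ)) ∧
      IsUnit (Matrix.of fun i j : Fin n => ((((i : ℕ) + (j : ℕ) + δ).factorial : ℝ))) := by
  have hdet := hankel_factorial_det n δ
  refine ⟨hdet, ?_⟩
  rw [Matrix.isUnit_iff_isUnit_det, hdet, isUnit_iff_ne_zero]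
  apply Finset.prod_ne_zero_iff.mpr
  intro k _
  positivity
end

section
/- Let 0 < κ < 1 and for each natural number ℓ let B_ℓ(κ) be the infinite matrix (indexed by ℕ × ℕ) with entries (B_ℓ(κ))_{m,n} = √C(m+ℓ, ℓ) (√(1-κ²))^ℓ κ^m if n = m + ℓ and 0 otherwise. Then every nonzero finite linear combination M = ∑_ℓ c_ℓ B_ℓ(κ) (with complex coefficients c_ℓ, not all zero) has infinite rank; in particular no nonzero element of the linear span of {B_ℓ(κ)} has finite rank. -/
/-- Entries (in the Fock basis, cast into `ℂ`) of the Kraus operators `B_ℓ(κ)` of the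
quantum-limited attenuator channel. -/
noncomputable def Bent (κ : ℝ) (ℓ m n : ℕ) : ℂ :=
  if n = m + ℓ then
    ((Real.sqrt ((m + ℓ).choose ℓ) * (Real.sqrt (1 - κ ^ 2)) ^ ℓ * κ ^ m : ℝ) : ℂ)
  else 0

/-- `B_ℓ(κ)` as a linear operator from finitely supported sequences to sequences. -/
noncomputable def Bop (κ : ℝ) (ℓ : ℕ) : (ℕ →₀ ℂ) →ₗ[ℂ] (ℕ → ℂ) :=
  Finsupp.lsum ℂ fun n => LinearMap.toSpanSingleton ℂ (ℕ → ℂ) (fun m => Bent κ ℓ m n)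

/-- A "triangular" family of sequences (each `v n` has top nonzero coordinate at `n`)
is linearly independent. -/
lemma tri_indep {v : ℕ → ℕ → ℂ} (hd : ∀ n, v n n ≠ 0)
    (hu : ∀ n m, n < m → v n m = 0) : LinearIndependent ℂ v := by
  rw [linearIndependent_iff']
  intro t g
  induction t using Finset.induction_on_max with
  | empty => simp
  | insert a t hlt ih =>
    intro hsum
    have hins : a ∉ t := fun h => lt_irrefl a (hlt a h)
    have ha : g a = 0 := by
      have h1 := congrFun hsum a
      simp only [Finset.sum_apply, Pi.smul_apply, smul_eq_mul, Pi.zero_apply,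
        Finset.sum_insert hins] at h1
      have h0 : ∑ i ∈ t, g i * v i a = 0 :=
        Finset.sum_eq_zero fun i hi => by rw [hu i a (hlt i hi), mul_zero]
      rw [h0, add_zero] at h1
      exact (mul_eq_zero.mp h1).resolve_right (hd a)
    intro i hi
    rcases Finset.mem_insert.mp hi with rfl | hi
    · exact ha
    · refine ih ?_ i hi
      rwa [Finset.sum_insert hins, ha, zero_smul, zero_add] at hsum

/-- No nonzero finite linear combination of attenuator Kraus operators has finite rank:
any `M = ∑ c_ℓ B_ℓ(κ)` with some `c_ℓ ≠ 0` has infinite rank. -/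
theorem stmt_14 (κ : ℝ) (hκ0 : 0 < κ) (hκ1 : κ < 1) (s : Finset ℕ) (c : ℕ → ℂ)
    (hc : ∃ ℓ ∈ s, c ℓ ≠ 0) :
    Cardinal.aleph0 ≤ Module.rank ℂ (LinearMap.range (∑ ℓ ∈ s, c ℓ • Bop κ ℓ)) := by
  classical
  obtain ⟨ℓ₁, hℓ₁s, hℓ₁⟩ := hc
  set t : Finset ℕ := s.filter (fun ℓ => c ℓ ≠ 0) with ht
  have htne : t.Nonempty := ⟨ℓ₁, Finset.mem_filter.mpr ⟨hℓ₁s, hℓ₁⟩⟩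
  set ℓ₀ := t.min' htne with hℓ₀def
  have hℓ₀t : ℓ₀ ∈ t := t.min'_mem htne
  have hc₀ : c ℓ₀ ≠ 0 := (Finset.mem_filter.mp hℓ₀t).2
  have hℓ₀s : ℓ₀ ∈ s := (Finset.mem_filter.mp hℓ₀t).1
  have hmin : ∀ ℓ ∈ s, ℓ < ℓ₀ → c ℓ = 0 := by
    intro ℓ hℓ hlt
    by_contra h
    exact absurd (t.min'_le ℓ (Finset.mem_filter.mpr ⟨hℓ, h⟩)) (not_le.mpr hlt)
  set M : (ℕ →₀ ℂ) →ₗ[ℂ] (ℕ → ℂ) := ∑ ℓ ∈ s, c ℓ • Bop κ ℓ with hM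
  set v : ℕ → ℕ → ℂ := fun n => M (Finsupp.single (n + ℓ₀) 1) with hv
  have hval : ∀ n m, v n m = ∑ ℓ ∈ s, c ℓ * Bent κ ℓ m (n + ℓ₀) := by
    intro n m
    simp [hv, hM, Bop, LinearMap.sum_apply, Finsupp.lsum_single,
      LinearMap.toSpanSingleton_apply]
  have h1κ : (0:ℝ) < 1 - κ ^ 2 := by nlinarith
  have hd : ∀ n, v n n ≠ 0 := by
    intro n
    rw [hval]
    rw [Finset.sum_eq_single ℓ₀ (fun ℓ hℓ hne => by
      rw [Bent, if_neg (fun h => hne (by omega)), mul_zero]) (fun h => absurd hℓ₀s h)]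
    rw [Bent, if_pos rfl]
    refine mul_ne_zero hc₀ ?_
    rw [Complex.ofReal_ne_zero]
    have h2 : (0:ℝ) < ((n + ℓ₀).choose ℓ₀ : ℝ) := by
      exact_mod_cast Nat.choose_pos (Nat.le_add_left ℓ₀ n)
    exact ne_of_gt (mul_pos (mul_pos (Real.sqrt_pos.mpr h2)
      (pow_pos (Real.sqrt_pos.mpr h1κ) ℓ₀)) (pow_pos hκ0 n))
  have hu : ∀ n m, n < m → v n m = 0 := by
    intro n m hnm
    rw [hval]
    refine Finset.sum_eq_zero fun ℓ hℓ => ?_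
    by_cases h : n + ℓ₀ = m + ℓ
    · rw [hmin ℓ hℓ (by omega), zero_mul]
    · rw [Bent, if_neg h, mul_zero]
  have hli : LinearIndependent ℂ v := tri_indep hd hu
  have hmem : ∀ n, v n ∈ LinearMap.range M := fun n => ⟨_, rfl⟩
  have hli2 : LinearIndependent ℂ (fun n => (⟨v n, hmem n⟩ : LinearMap.range M)) :=
    LinearIndependent.of_comp (LinearMap.range M).subtype hli
  exact hli2.aleph0_le_rank
end

section
/- For natural numbers m, ℓ, δ and real η > 0, the integral ∫₀^∞ e^{-(η²+1)t} t^δ L_m^δ(η² t) L_ℓ^δ(t) dt equals ((m+ℓ+δ)! / (m! ℓ!)) · η^{2ℓ} / (η²+1)^{m+ℓ+δ+1}, where L_k^δ denotes the associated Laguerre polynomial. -/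
open MeasureTheory

/-- The associated (generalized) Laguerre polynomial `L_n^δ(x)`. -/
noncomputable def lag (n δ : ℕ) (x : ℝ) : ℝ :=
  ∑ i ∈ Finset.range (n + 1),
    (-1 : ℝ) ^ i * ((n + δ).choose (n - i) : ℝ) * x ^ i / (i.factorial : ℝ)


open Finset PowerSeries


lemma coeff_one_sub_pow (N k : ℕ) : (PowerSeries.coeff (R := ℝ) k) ((1 - PowerSeries.X)^N) = (-1:ℝ)^k * (N.choose k) := by
  have h : (1 - PowerSeries.X : ℝ⟦X⟧) = PowerSeries.rescale (-1) (1 + PowerSeries.X) := by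
    ext n
    simp [PowerSeries.coeff_rescale]
    cases n with
    | zero => simp
    | succ n => cases n <;> simp
  rw [h, ← map_pow, PowerSeries.coeff_rescale]
  have h2 : (1 + PowerSeries.X : ℝ⟦X⟧)^N = ((1 + Polynomial.X : Polynomial ℝ)^N : Polynomial ℝ) := by
    push_cast
    simp
  rw [h2, Polynomial.coeff_coe, Polynomial.coeff_one_add_X_pow]

lemma prod_eval (δ i ℓ : ℕ) :
    (PowerSeries.coeff (R := ℝ) ℓ) ((1 - PowerSeries.X)^(ℓ+δ) * (PowerSeries.invOneSubPow ℝ (δ+i+1)).val)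
      = (i.choose ℓ : ℝ) := by
  set u : (PowerSeries ℝ)ˣ := Units.mkOfMulEqOne (1 - PowerSeries.X) (PowerSeries.mk 1 : ℝ⟦X⟧) <|
      Eq.trans (mul_comm _ _) (PowerSeries.mk_one_mul_one_sub_eq_one ℝ) with hu
  have huval : (u : ℝ⟦X⟧) = 1 - PowerSeries.X := rfl
  have hbase : ∀ N d : ℕ, (1 - PowerSeries.X : ℝ⟦X⟧)^N * (PowerSeries.invOneSubPow ℝ d).val
      = ((u^N * (u⁻¹)^d : (PowerSeries ℝ)ˣ) : ℝ⟦X⟧) := by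
    intro N d
    rw [PowerSeries.invOneSubPow_eq_inv_one_sub_pow, ← hu, Units.val_mul]
    simp [Units.val_pow_eq_pow_val, huval]
  rcases le_or_gt ℓ i with h | h
  · have key : (1 - PowerSeries.X : ℝ⟦X⟧)^(ℓ+δ) * (PowerSeries.invOneSubPow ℝ (δ+i+1)).val
        = (PowerSeries.invOneSubPow ℝ (i-ℓ+1)).val := by
      rw [hbase, PowerSeries.invOneSubPow_eq_inv_one_sub_pow, ← hu]
      congr 1
      rw [show δ + i + 1 = (ℓ+δ) + (i-ℓ+1) by omega]
      group
    rw [key, PowerSeries.invOneSubPow_val_succ_eq_mk_add_choose, PowerSeries.coeff_mk,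
      show i - ℓ + ℓ = i from by omega, Nat.choose_symm h]
  · have key : (1 - PowerSeries.X : ℝ⟦X⟧)^(ℓ+δ) * (PowerSeries.invOneSubPow ℝ (δ+i+1)).val
        = (1 - PowerSeries.X)^(ℓ-i-1) := by
      rw [hbase]
      have : u^(ℓ+δ) * u⁻¹^(δ+i+1) = u^(ℓ-i-1) := by
        rw [show ℓ + δ = (ℓ-i-1) + (δ+i+1) by omega]
        group
      rw [this, Units.val_pow_eq_pow_val, huval]
    rw [key, coeff_one_sub_pow, Nat.choose_eq_zero_of_lt (by omega),
      Nat.choose_eq_zero_of_lt h]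
    simp

lemma lemA (δ i ℓ : ℕ) :
    ∑ j ∈ range (ℓ+1), (-1:ℝ)^j * ((ℓ+δ).choose (ℓ-j)) * ((δ+i+j).choose j)
      = (-1:ℝ)^ℓ * (i.choose ℓ) := by
  have h0 := prod_eval δ i ℓ
  rw [PowerSeries.coeff_mul, PowerSeries.invOneSubPow_val_succ_eq_mk_add_choose] at h0
  simp only [PowerSeries.coeff_mk, coeff_one_sub_pow] at h0
  rw [Finset.Nat.sum_antidiagonal_eq_sum_range_succ_mk] at h0
  simp only at h0
  have h2 : ∑ k ∈ range (ℓ+1), (-1:ℝ)^k * ((ℓ+δ).choose k) * ((δ+i+(ℓ-k)).choose (δ+i))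
      = (-1:ℝ)^ℓ * ∑ j ∈ range (ℓ+1), (-1:ℝ)^j * ((ℓ+δ).choose (ℓ-j)) * ((δ+i+j).choose j) := by
    rw [← Finset.sum_range_reflect, mul_sum]
    apply Finset.sum_congr rfl
    intro j hj
    simp only [mem_range] at hj
    have e1 : ℓ + 1 - 1 - j = ℓ - j := by omega
    have e2 : ℓ - (ℓ - j) = j := by omega
    have e3 : (δ+i+j).choose j = (δ+i+j).choose (δ+i) := by
      rw [← Nat.choose_symm (by omega : j ≤ δ+i+j)]
      congr 1
      omega
    rw [e1, e2, e3]
    have e4 : (-1:ℝ)^(ℓ-j) = (-1:ℝ)^ℓ * (-1:ℝ)^j := by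
      have : (-1:ℝ)^(ℓ-j) * ((-1:ℝ)^j * (-1:ℝ)^j) = (-1:ℝ)^ℓ * (-1:ℝ)^j := by
        rw [← pow_add, ← pow_add, show ℓ - j + (j + j) = ℓ + j by omega, pow_add]
      have hsq : (-1:ℝ)^j * (-1:ℝ)^j = 1 := by
        rw [← pow_add, ← two_mul, pow_mul]
        norm_num
      rw [hsq, mul_one] at this
      exact this
    rw [e4]
    ring
  rw [h0] at h2
  have : (-1:ℝ)^ℓ * ((i.choose ℓ : ℝ)) = (-1:ℝ)^ℓ * ((-1:ℝ)^ℓ * ∑ j ∈ range (ℓ+1), (-1:ℝ)^j * ((ℓ+δ).choose (ℓ-j)) * ((δ+i+j).choose j)) := by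
    rw [← h2]
  rw [← mul_assoc, ← pow_add, ← two_mul, pow_mul] at this
  norm_num at this
  linarith [this]


-- factorial form
lemma lemA' (δ i ℓ : ℕ) :
    ∑ j ∈ range (ℓ+1), (-1:ℝ)^j * ((ℓ+δ).choose (ℓ-j)) * ((δ+i+j).factorial / j.factorial)
      = (-1:ℝ)^ℓ * (δ+i).factorial * (i.choose ℓ) := by
  have key : ∀ j : ℕ, ((δ+i+j).factorial : ℝ) / j.factorial = (δ+i).factorial * ((δ+i+j).choose j) := by
    intro j
    rw [Nat.cast_choose ℝ (by omega : j ≤ δ+i+j)]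
    have h1 : (j.factorial : ℝ) ≠ 0 := by positivity
    have h2 : ((δ+i+j-j).factorial : ℝ) ≠ 0 := by positivity
    rw [show δ+i+j-j = δ+i from by omega]
    field_simp
  calc ∑ j ∈ range (ℓ+1), (-1:ℝ)^j * ((ℓ+δ).choose (ℓ-j)) * ((δ+i+j).factorial / j.factorial)
      = (δ+i).factorial * ∑ j ∈ range (ℓ+1), (-1:ℝ)^j * ((ℓ+δ).choose (ℓ-j)) * ((δ+i+j).choose j) := by
        rw [mul_sum]
        exact Finset.sum_congr rfl fun j _ => by rw [key j]; ring
    _ = (-1:ℝ)^ℓ * (δ+i).factorial * (i.choose ℓ) := by rw [lemA]; ring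

lemma lemA2 (δ k j : ℕ) :
    ∑ i ∈ range (k+1), (-1:ℝ)^i * ((k+δ).choose (k-i)) * ((δ+i).factorial * (i.choose j) / i.factorial)
      = (-1:ℝ)^j * (if k = j then ((δ+k).factorial / k.factorial : ℝ) else 0) := by
  rcases lt_or_ge k j with hkj | hjk
  · rw [if_neg (by omega)]
    rw [Finset.sum_eq_zero, mul_zero]
    intro i hi
    simp only [mem_range] at hi
    rw [Nat.choose_eq_zero_of_lt (by omega : i < j)]
    simp
  · -- j ≤ k : restrict to i ∈ Icc j k
    have hsub : ∑ i ∈ range (k+1), (-1:ℝ)^i * ((k+δ).choose (k-i)) * ((δ+i).factorial * (i.choose j) / i.factorial)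
        = ∑ i ∈ Icc j k, (-1:ℝ)^i * ((k+δ).choose (k-i)) * ((δ+i).factorial * (i.choose j) / i.factorial) := by
      refine (Finset.sum_subset (fun x hx => ?_) (fun i hi hni => ?_)).symm
      · simp only [mem_Icc] at hx
        simp only [mem_range]
        omega
      · simp only [mem_range, mem_Icc] at hi hni
        rw [Nat.choose_eq_zero_of_lt (by omega : i < j)]
        simp
    rw [hsub, show Icc j k = Ico j (k+1) from by rw [Finset.Ico_add_one_right_eq_Icc],
      Finset.sum_Ico_eq_sum_range, show k + 1 - j = (k-j)+1 from by omega]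
    have key : ∀ r : ℕ, r ≤ k - j →
        (-1:ℝ)^(j+r) * ((k+δ).choose (k-(j+r))) * ((δ+(j+r)).factorial * ((j+r).choose j) / (j+r).factorial)
        = ((-1:ℝ)^j * ((δ+j).factorial / j.factorial)) *
          ((-1:ℝ)^r * (((k-j)+(δ+j)).choose ((k-j)-r)) * (((δ+j)+0+r).choose r)) := by
      intro r hr
      rw [pow_add]
      rw [show (k-j)+(δ+j) = k+δ from by omega, show (k-j)-r = k-(j+r) from by omega,
        show (δ+j)+0+r = δ+(j+r) from by omega]
      have e1 : ((j+r).choose j : ℝ) = (j+r).factorial / (j.factorial * r.factorial) := by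
        rw [Nat.cast_choose ℝ (by omega : j ≤ j+r), show j+r-j = r from by omega]
      have e2 : ((δ+(j+r)).choose r : ℝ) = (δ+(j+r)).factorial / (r.factorial * (δ+j).factorial) := by
        rw [Nat.cast_choose ℝ (by omega : r ≤ δ+(j+r)), show δ+(j+r)-r = δ+j from by omega]
      rw [e1, e2]
      have h1 : (j.factorial : ℝ) ≠ 0 := by positivity
      have h2 : (r.factorial : ℝ) ≠ 0 := by positivity
      have h3 : ((j+r).factorial : ℝ) ≠ 0 := by positivity
      have h4 : ((δ+j).factorial : ℝ) ≠ 0 := by positivity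
      field_simp
    rw [Finset.sum_congr rfl (fun r hr => key r (by simpa using Nat.lt_succ_iff.mp (mem_range.mp hr)))]
    rw [← Finset.mul_sum, lemA (δ+j) 0 (k-j)]
    rcases eq_or_ne k j with h | h
    · subst h
      simp
    · rw [if_neg h, Nat.choose_eq_zero_of_lt (by omega : 0 < k - j)]
      simp

lemma integrable_texp {a : ℝ} (ha : 0 < a) (n : ℕ) :
    IntegrableOn (fun t : ℝ => Real.exp (-(a*t)) * t^n) (Set.Ioi 0) := by
  have h := integrableOn_rpow_mul_exp_neg_mul_rpow (p := 1) (s := n) (b := a)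
    (by linarith [Nat.cast_nonneg (α := ℝ) n]) one_pos ha
  apply h.congr_fun _ measurableSet_Ioi
  intro t ht
  simp only [Real.rpow_natCast, Real.rpow_one]
  ring_nf
lemma integral_texp {a : ℝ} (ha : 0 < a) (n : ℕ) :
    ∫ t in Set.Ioi (0:ℝ), Real.exp (-(a*t)) * t^n = (n.factorial : ℝ) / a^(n+1) := by
  have h := Real.integral_rpow_mul_exp_neg_mul_Ioi (a := (n+1 : ℝ)) (r := a) (by positivity) ha
  rw [show ((n:ℝ)+1) - 1 = (n:ℝ) from by ring] at h
  have h2 : ∫ t in Set.Ioi (0:ℝ), Real.exp (-(a*t)) * t^n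
      = ∫ t in Set.Ioi (0:ℝ), t ^ (n:ℝ) * Real.exp (-(a*t)) := by
    apply setIntegral_congr_fun measurableSet_Ioi
    intro t ht
    simp only [Real.rpow_natCast]
    ring
  rw [h2, h, show ((n:ℝ)+1) = ((n+1:ℕ):ℝ) from by push_cast; ring, Real.rpow_natCast,
    show ((n+1:ℕ):ℝ) = (n:ℝ)+1 from by push_cast; ring, Real.Gamma_nat_eq_factorial,
    div_pow, one_pow]
  ring


-- trinomial revision, Nat level
lemma tri {δ n k i : ℕ} (hik : i ≤ k) (hkn : k ≤ n) :
    (n+δ).choose (n-k) * (k+δ).choose (k-i) = (n+δ).choose (n-i) * (n-i).choose (k-i) := by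
  have e1 : (n+δ).choose (n-k) = (n+δ).choose (δ+k) := by
    rw [← Nat.choose_symm (by omega : δ+k ≤ n+δ), show n+δ-(δ+k) = n-k from by omega]
  have e2 : (k+δ).choose (k-i) = (δ+k).choose (δ+i) := by
    rw [← Nat.choose_symm (by omega : δ+i ≤ δ+k), show δ+k-(δ+i) = k-i from by omega,
      add_comm k δ]
  have e3 : (n+δ).choose (δ+i) = (n+δ).choose (n-i) := by
    rw [← Nat.choose_symm (by omega : δ+i ≤ n+δ), show n+δ-(δ+i) = n-i from by omega]
  rw [e1, e2, Nat.choose_mul (n := n+δ) (k := δ+k) (s := δ+i) (by omega), e3,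
    show n+δ-(δ+i) = n-i from by omega, show δ+k-(δ+i) = k-i from by omega]

-- multiplication theorem
lemma lemB (n δ : ℕ) (lam x : ℝ) :
    lag n δ (lam * x) = ∑ k ∈ range (n+1),
      ((n+δ).choose (n-k) : ℝ) * lam^k * (1-lam)^(n-k) * lag k δ x := by
  simp only [lag, Finset.mul_sum]
  have swap : ∑ k ∈ range (n+1), ∑ i ∈ range (k+1),
      ((n+δ).choose (n-k) : ℝ) * lam^k * (1-lam)^(n-k) *
        ((-1:ℝ)^i * ((k+δ).choose (k-i) : ℝ) * x^i / i.factorial)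
      = ∑ i ∈ range (n+1), ∑ k ∈ Finset.Ico i (n+1),
      ((n+δ).choose (n-k) : ℝ) * lam^k * (1-lam)^(n-k) *
        ((-1:ℝ)^i * ((k+δ).choose (k-i) : ℝ) * x^i / i.factorial) := by
    simp only [Finset.range_eq_Ico]
    exact (Finset.sum_Ico_Ico_comm 0 (n+1) (fun i k =>
      ((n+δ).choose (n-k) : ℝ) * lam^k * (1-lam)^(n-k) *
        ((-1:ℝ)^i * ((k+δ).choose (k-i) : ℝ) * x^i / i.factorial))).symm
  calc ∑ i ∈ Finset.range (n + 1),
        (-1 : ℝ) ^ i * ((n + δ).choose (n - i) : ℝ) * (lam*x) ^ i / (i.factorial : ℝ)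
      = ∑ i ∈ range (n+1), ∑ k ∈ Finset.Ico i (n+1),
        ((n+δ).choose (n-k) : ℝ) * lam^k * (1-lam)^(n-k) *
          ((-1:ℝ)^i * ((k+δ).choose (k-i) : ℝ) * x^i / i.factorial) := by
        apply Finset.sum_congr rfl
        intro i hi
        simp only [mem_range] at hi
        have inner : ∑ k ∈ Finset.Ico i (n+1),
            ((n+δ).choose (n-k) : ℝ) * lam^k * (1-lam)^(n-k) *
              ((-1:ℝ)^i * ((k+δ).choose (k-i) : ℝ) * x^i / i.factorial)
            = ((-1:ℝ)^i * ((n+δ).choose (n-i) : ℝ) * x^i / i.factorial) *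
              ∑ r ∈ range ((n-i)+1), ((n-i).choose r : ℝ) * lam^(i+r) * (1-lam)^(n-i-r) := by
          rw [Finset.sum_Ico_eq_sum_range, show n + 1 - i = (n-i)+1 from by omega, Finset.mul_sum]
          apply Finset.sum_congr rfl
          intro r hr
          simp only [mem_range] at hr
          have ht : ((n+δ).choose (n-(i+r)) : ℝ) * ((i+r+δ).choose (i+r-i) : ℝ)
              = ((n+δ).choose (n-i) : ℝ) * ((n-i).choose (i+r-i) : ℝ) := by
            rw [← Nat.cast_mul, ← Nat.cast_mul, tri (by omega) (by omega)]
          rw [show i+r-i = r from by omega] at ht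
          have : (n - (i+r)) = (n-i) - r := by omega
          rw [this] at ht ⊢
          rw [show i+r-i = r from by omega]
          linear_combination (lam^(i+r) * (1-lam)^(n-i-r) * ((-1:ℝ)^i * x^i / i.factorial)) * ht
        rw [inner]
        have bin : ∑ r ∈ range ((n-i)+1), ((n-i).choose r : ℝ) * lam^(i+r) * (1-lam)^(n-i-r)
            = lam^i := by
          have := add_pow lam (1-lam) (n-i)
          rw [show lam + (1-lam) = 1 from by ring, one_pow] at this
          calc ∑ r ∈ range ((n-i)+1), ((n-i).choose r : ℝ) * lam^(i+r) * (1-lam)^(n-i-r)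
              = lam^i * ∑ r ∈ range ((n-i)+1), lam^r * (1-lam)^(n-i-r) * ((n-i).choose r : ℝ) := by
                rw [Finset.mul_sum]
                apply Finset.sum_congr rfl
                intro r _
                rw [pow_add]
                ring
            _ = lam^i := by rw [← this]; ring
        rw [bin]
        rw [mul_pow]
        ring
    _ = ∑ k ∈ range (n+1), ∑ i ∈ range (k+1),
        ((n+δ).choose (n-k) : ℝ) * lam^k * (1-lam)^(n-k) *
          ((-1:ℝ)^i * ((k+δ).choose (k-i) : ℝ) * x^i / i.factorial) := swap.symm


lemma lemC_nat (m ℓ δ : ℕ) :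
    ∑ k ∈ range (min m ℓ + 1), (m+δ).choose (m-k) * ((ℓ+δ).choose (ℓ-k) * (δ+k).choose δ)
      = (m+δ).choose δ * (m+ℓ+δ).choose ℓ := by
  have step1 : ∀ k, k ≤ min m ℓ →
      (m+δ).choose (m-k) * ((ℓ+δ).choose (ℓ-k) * (δ+k).choose δ)
      = (m+δ).choose δ * (m.choose k * (ℓ+δ).choose (ℓ-k)) := by
    intro k hk
    have h1 := tri (δ := δ) (n := m) (k := k) (i := 0) (Nat.zero_le k) (by omega)
    simp only [Nat.sub_zero] at h1
    have e1 : (k+δ).choose (k-0) = (δ+k).choose δ := by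
      rw [Nat.sub_zero, ← Nat.choose_symm (by omega : δ ≤ δ+k), show δ+k-δ = k from by omega,
        add_comm δ k]
    have e2 : (m+δ).choose m = (m+δ).choose δ := by
      rw [← Nat.choose_symm (by omega : δ ≤ m+δ), show m+δ-δ = m from by omega]
    rw [Nat.sub_zero] at e1
    rw [show (m+δ).choose (m-k) * ((ℓ+δ).choose (ℓ-k) * (δ+k).choose δ)
        = ((m+δ).choose (m-k) * (k+δ).choose k) * (ℓ+δ).choose (ℓ-k) from by rw [← e1]; ring,
      h1, e2]
    ring
  rw [Finset.sum_congr rfl (fun k hk => step1 k (by simpa using Nat.lt_succ_iff.mp (mem_range.mp hk)))]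
  rw [← Finset.mul_sum]
  congr 1
  have ext : ∑ k ∈ range (min m ℓ + 1), m.choose k * (ℓ+δ).choose (ℓ-k)
      = ∑ k ∈ range (ℓ + 1), m.choose k * (ℓ+δ).choose (ℓ-k) := by
    apply Finset.sum_subset
    · intro x hx
      simp only [mem_range] at *
      omega
    · intro k hk hnk
      simp only [mem_range] at hk hnk
      rw [Nat.choose_eq_zero_of_lt (by omega : m < k), zero_mul]
  rw [ext]
  have := Nat.add_choose_eq m (ℓ+δ) ℓ
  rw [Finset.Nat.sum_antidiagonal_eq_sum_range_succ_mk] at this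
  rw [show m+ℓ+δ = m+(ℓ+δ) from by omega, this]



lemma lag_expand (a : ℝ) (δ k j : ℕ) (t : ℝ) :
    Real.exp (-(a*t)) * t^δ * lag k δ (a*t) * lag j δ (a*t)
    = ∑ i ∈ range (k+1), ∑ i' ∈ range (j+1),
        ((-1:ℝ)^i * ((k+δ).choose (k-i)) * a^i / i.factorial) *
        ((-1:ℝ)^i' * ((j+δ).choose (j-i')) * a^i' / i'.factorial) *
        (Real.exp (-(a*t)) * t^(δ+i+i')) := by
  simp only [lag, Finset.sum_mul, Finset.mul_sum]
  rw [Finset.sum_comm]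
  apply Finset.sum_congr rfl
  intro i _
  apply Finset.sum_congr rfl
  intro i' _
  rw [pow_add, pow_add, mul_pow, mul_pow]
  ring

lemma olemma {a : ℝ} (ha : 0 < a) (δ k j : ℕ) :
    ∫ t in Set.Ioi (0:ℝ), Real.exp (-(a*t)) * t^δ * lag k δ (a*t) * lag j δ (a*t)
      = (if k = j then ((δ+k).factorial / k.factorial : ℝ) else 0) / a^(δ+1) := by
  have hrw : ∀ t : ℝ, Real.exp (-(a*t)) * t^δ * lag k δ (a*t) * lag j δ (a*t)
      = ∑ i ∈ range (k+1), ∑ i' ∈ range (j+1),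
        ((-1:ℝ)^i * ((k+δ).choose (k-i)) * a^i / i.factorial) *
        ((-1:ℝ)^i' * ((j+δ).choose (j-i')) * a^i' / i'.factorial) *
        (Real.exp (-(a*t)) * t^(δ+i+i')) := lag_expand a δ k j
  rw [show (fun t => Real.exp (-(a*t)) * t^δ * lag k δ (a*t) * lag j δ (a*t)) = _ from funext hrw]
  have ha' : (a:ℝ) ≠ 0 := ne_of_gt ha
  rw [MeasureTheory.integral_finset_sum _ (fun i _ => ?_)]
  swap
  · exact MeasureTheory.integrable_finset_sum _ (fun i' _ =>
      ((integrable_texp ha (δ+i+i')).const_mul _))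
  calc
    ∑ i ∈ range (k+1), ∫ t in Set.Ioi (0:ℝ), ∑ i' ∈ range (j+1),
        ((-1:ℝ)^i * ((k+δ).choose (k-i)) * a^i / i.factorial) *
        ((-1:ℝ)^i' * ((j+δ).choose (j-i')) * a^i' / i'.factorial) *
        (Real.exp (-(a*t)) * t^(δ+i+i'))
      = ∑ i ∈ range (k+1), ∑ i' ∈ range (j+1),
        ((-1:ℝ)^i * ((k+δ).choose (k-i)) * a^i / i.factorial) *
        ((-1:ℝ)^i' * ((j+δ).choose (j-i')) * a^i' / i'.factorial) *
        ((δ+i+i').factorial / a^(δ+i+i'+1)) := by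
        apply Finset.sum_congr rfl
        intro i _
        rw [MeasureTheory.integral_finset_sum _ (fun i' _ =>
          ((integrable_texp ha (δ+i+i')).const_mul _))]
        apply Finset.sum_congr rfl
        intro i' _
        rw [MeasureTheory.integral_const_mul, integral_texp ha]
    _ = ∑ i ∈ range (k+1), ((-1:ℝ)^i * ((k+δ).choose (k-i)) / i.factorial) *
          ((-1:ℝ)^j * (δ+i).factorial * (i.choose j)) / a^(δ+1) := by
        apply Finset.sum_congr rfl
        intro i _
        rw [← lemA' δ i j, Finset.mul_sum, Finset.sum_div]
        apply Finset.sum_congr rfl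
        intro i' _
        have e : a^(δ+i+i'+1) = a^(δ+1) * a^i * a^i' := by
          rw [← pow_add, ← pow_add]
          congr 1
          omega
        rw [e]
        have h1 : (i.factorial : ℝ) ≠ 0 := by positivity
        have h2 : (i'.factorial : ℝ) ≠ 0 := by positivity
        have h3 : (a:ℝ)^(δ+1) ≠ 0 := pow_ne_zero _ ha'
        have h4 : (a:ℝ)^i ≠ 0 := pow_ne_zero _ ha'
        have h5 : (a:ℝ)^i' ≠ 0 := pow_ne_zero _ ha'
        field_simp
    _ = (if k = j then ((δ+k).factorial / k.factorial : ℝ) else 0) / a^(δ+1) := by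
        rw [← Finset.sum_div]
        congr 1
        have : ∑ i ∈ range (k+1), ((-1:ℝ)^i * ((k+δ).choose (k-i)) / i.factorial) *
            ((-1:ℝ)^j * (δ+i).factorial * (i.choose j))
            = (-1:ℝ)^j * ∑ i ∈ range (k+1), (-1:ℝ)^i * ((k+δ).choose (k-i)) *
              ((δ+i).factorial * (i.choose j) / i.factorial) := by
          rw [Finset.mul_sum]
          apply Finset.sum_congr rfl
          intro i _
          ring
        rw [this, lemA2, ← mul_assoc, ← pow_add, ← two_mul, pow_mul]
        norm_num



/-- Overlap integral between a Laguerre function and a scaled Laguerre function: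
`∫₀^∞ e^{-(η²+1)t} t^δ L_m^δ(η²t) L_ℓ^δ(t) dt
  = ((m+ℓ+δ)!/(m! ℓ!)) η^{2ℓ} / (η²+1)^{m+ℓ+δ+1}`. -/
theorem stmt_16 (m ℓ δ : ℕ) (η : ℝ) (hη : 0 < η) :
    ∫ t in Set.Ioi (0 : ℝ),
        Real.exp (-((η ^ 2 + 1) * t)) * t ^ δ * lag m δ (η ^ 2 * t) * lag ℓ δ t
      = ((m + ℓ + δ).factorial : ℝ) / ((m.factorial : ℝ) * (ℓ.factorial : ℝ)) *
          η ^ (2 * ℓ) / (η ^ 2 + 1) ^ (m + ℓ + δ + 1) := by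
  set a : ℝ := η^2 + 1 with hadef
  have ha : 0 < a := by positivity
  have ha' : a ≠ 0 := ne_of_gt ha
  set p : ℝ := η^2 / a with hpdef
  set q : ℝ := 1 / a with hqdef
  have hp1 : 1 - p = q := by
    rw [hpdef, hqdef]
    field_simp
    rw [hadef]
    ring
  have hq1 : 1 - q = p := by
    rw [hpdef, hqdef]
    field_simp
    rw [hadef]
    ring
  -- pointwise expansion of the integrand
  have hpt : ∀ t : ℝ,
      Real.exp (-(a * t)) * t ^ δ * lag m δ (η ^ 2 * t) * lag ℓ δ t
      = ∑ k ∈ range (m+1), ∑ j ∈ range (ℓ+1),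
          (((m+δ).choose (m-k) : ℝ) * p^k * q^(m-k)) *
          (((ℓ+δ).choose (ℓ-j) : ℝ) * q^j * p^(ℓ-j)) *
          (Real.exp (-(a*t)) * t^δ * lag k δ (a*t) * lag j δ (a*t)) := by
    intro t
    have e1 : η ^ 2 * t = p * (a * t) := by
      rw [hpdef]
      field_simp
    have e2 : t = q * (a * t) := by
      rw [hqdef]
      field_simp
    have eA : lag m δ (η^2*t) = ∑ k ∈ range (m+1),
        ((m+δ).choose (m-k) : ℝ) * p^k * q^(m-k) * lag k δ (a*t) := by
      rw [e1, lemB m δ p (a*t), hp1]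
    have eB : lag ℓ δ t = ∑ j ∈ range (ℓ+1),
        ((ℓ+δ).choose (ℓ-j) : ℝ) * q^j * p^(ℓ-j) * lag j δ (a*t) := by
      conv_lhs => rw [e2]
      rw [lemB ℓ δ q (a*t), hq1]
    rw [eA, eB]
    simp only [Finset.mul_sum, Finset.sum_mul]
    rw [Finset.sum_comm]
    apply Finset.sum_congr rfl
    intro k _
    apply Finset.sum_congr rfl
    intro j _
    ring
  have hint : ∀ k j : ℕ, IntegrableOn
      (fun t : ℝ => Real.exp (-(a*t)) * t^δ * lag k δ (a*t) * lag j δ (a*t)) (Set.Ioi 0) := by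
    intro k j
    rw [show (fun t : ℝ => Real.exp (-(a*t)) * t^δ * lag k δ (a*t) * lag j δ (a*t)) = _
      from funext (lag_expand a δ k j)]
    exact integrable_finset_sum _ (fun i _ =>
      integrable_finset_sum _ (fun i' _ => (integrable_texp ha (δ+i+i')).const_mul _))
  have key : ∫ t in Set.Ioi (0:ℝ),
      Real.exp (-(a * t)) * t ^ δ * lag m δ (η ^ 2 * t) * lag ℓ δ t
      = ∑ k ∈ range (m+1), ∑ j ∈ range (ℓ+1),
          (((m+δ).choose (m-k) : ℝ) * p^k * q^(m-k)) *
          (((ℓ+δ).choose (ℓ-j) : ℝ) * q^j * p^(ℓ-j)) *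
          ((if k = j then ((δ+k).factorial / k.factorial : ℝ) else 0) / a^(δ+1)) := by
    rw [show (fun t : ℝ => Real.exp (-(a * t)) * t ^ δ * lag m δ (η ^ 2 * t) * lag ℓ δ t) = _
      from funext hpt]
    rw [MeasureTheory.integral_finset_sum _ (fun k _ =>
      integrable_finset_sum _ (fun j _ => ((hint k j).const_mul _)))]
    apply Finset.sum_congr rfl
    intro k _
    rw [MeasureTheory.integral_finset_sum _ (fun j _ => ((hint k j).const_mul _))]
    apply Finset.sum_congr rfl
    intro j _
    rw [MeasureTheory.integral_const_mul, olemma ha]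
  rw [key]
  -- collapse the diagonal
  have diag : ∀ k ∈ range (m+1), ∑ j ∈ range (ℓ+1),
      (((m+δ).choose (m-k) : ℝ) * p^k * q^(m-k)) *
      (((ℓ+δ).choose (ℓ-j) : ℝ) * q^j * p^(ℓ-j)) *
      ((if k = j then ((δ+k).factorial / k.factorial : ℝ) else 0) / a^(δ+1))
      = if k ∈ range (ℓ+1) then
          (((m+δ).choose (m-k) : ℝ) * p^k * q^(m-k)) *
          (((ℓ+δ).choose (ℓ-k) : ℝ) * q^k * p^(ℓ-k)) *
          (((δ+k).factorial / k.factorial : ℝ) / a^(δ+1)) else 0 := by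
    intro k _
    rw [← Finset.sum_ite_eq (range (ℓ+1)) k (fun j =>
      (((m+δ).choose (m-k) : ℝ) * p^k * q^(m-k)) *
      (((ℓ+δ).choose (ℓ-j) : ℝ) * q^j * p^(ℓ-j)) *
      (((δ+k).factorial / k.factorial : ℝ) / a^(δ+1)))]
    apply Finset.sum_congr rfl
    intro j _
    by_cases h : k = j <;> simp [h]
  rw [Finset.sum_congr rfl diag, Finset.sum_ite_mem]
  have hinter : range (m+1) ∩ range (ℓ+1) = range (min m ℓ + 1) := by
    ext x
    simp only [Finset.mem_inter, mem_range]
    omega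
  rw [hinter]
  -- pull out p^ℓ q^m
  have hfactor : ∀ k ∈ range (min m ℓ + 1),
      (((m+δ).choose (m-k) : ℝ) * p^k * q^(m-k)) *
      (((ℓ+δ).choose (ℓ-k) : ℝ) * q^k * p^(ℓ-k)) *
      (((δ+k).factorial / k.factorial : ℝ) / a^(δ+1))
      = (((m+δ).choose (m-k) : ℝ) * (((ℓ+δ).choose (ℓ-k) : ℝ) * ((δ+k).factorial / k.factorial))) *
        (p^ℓ * q^m / a^(δ+1)) := by
    intro k hk
    simp only [mem_range] at hk
    have e1 : p^k * p^(ℓ-k) = p^ℓ := by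
      rw [← pow_add]
      congr 1
      omega
    have e2 : q^(m-k) * q^k = q^m := by
      rw [← pow_add]
      congr 1
      omega
    calc (((m+δ).choose (m-k) : ℝ) * p^k * q^(m-k)) *
      (((ℓ+δ).choose (ℓ-k) : ℝ) * q^k * p^(ℓ-k)) *
      (((δ+k).factorial / k.factorial : ℝ) / a^(δ+1))
        = (((m+δ).choose (m-k) : ℝ) * (((ℓ+δ).choose (ℓ-k) : ℝ) * ((δ+k).factorial / k.factorial))) *
          ((p^k * p^(ℓ-k)) * (q^(m-k) * q^k) / a^(δ+1)) := by ring
      _ = _ := by rw [e1, e2]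
  rw [Finset.sum_congr rfl hfactor, ← Finset.sum_mul]
  -- evaluate the combinatorial sum
  have hS : ∑ k ∈ range (min m ℓ + 1),
      (((m+δ).choose (m-k) : ℝ) * (((ℓ+δ).choose (ℓ-k) : ℝ) * ((δ+k).factorial / k.factorial)))
      = ((m + ℓ + δ).factorial : ℝ) / ((m.factorial : ℝ) * (ℓ.factorial : ℝ)) := by
    have hterm : ∀ k : ℕ, ((δ+k).factorial / k.factorial : ℝ)
        = ((δ+k).choose δ : ℝ) * δ.factorial := by
      intro k
      rw [Nat.cast_choose ℝ (by omega : δ ≤ δ+k), show δ+k-δ = k from by omega]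
      have h1 : (δ.factorial : ℝ) ≠ 0 := by positivity
      have h2 : (k.factorial : ℝ) ≠ 0 := by positivity
      field_simp
    calc ∑ k ∈ range (min m ℓ + 1),
        (((m+δ).choose (m-k) : ℝ) * (((ℓ+δ).choose (ℓ-k) : ℝ) * ((δ+k).factorial / k.factorial)))
        = (δ.factorial : ℝ) * ∑ k ∈ range (min m ℓ + 1),
          (((m+δ).choose (m-k) : ℝ) * (((ℓ+δ).choose (ℓ-k) : ℝ) * ((δ+k).choose δ : ℝ))) := by
          rw [Finset.mul_sum]
          exact Finset.sum_congr rfl fun k _ => by rw [hterm k]; ring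
      _ = (δ.factorial : ℝ) * (((m+δ).choose δ : ℝ) * ((m+ℓ+δ).choose ℓ : ℝ)) := by
          congr 1
          exact_mod_cast congrArg (Nat.cast : ℕ → ℝ) (lemC_nat m ℓ δ)
      _ = ((m + ℓ + δ).factorial : ℝ) / ((m.factorial : ℝ) * (ℓ.factorial : ℝ)) := by
          rw [Nat.cast_choose ℝ (by omega : δ ≤ m+δ), show m+δ-δ = m from by omega,
            Nat.cast_choose ℝ (by omega : ℓ ≤ m+ℓ+δ), show m+ℓ+δ-ℓ = m+δ from by omega]
          have h1 : (δ.factorial : ℝ) ≠ 0 := by positivity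
          have h2 : (m.factorial : ℝ) ≠ 0 := by positivity
          have h3 : (ℓ.factorial : ℝ) ≠ 0 := by positivity
          have h4 : ((m+δ).factorial : ℝ) ≠ 0 := by positivity
          field_simp
  rw [hS]
  -- final power bookkeeping
  rw [hpdef, hqdef]
  rw [div_pow, div_pow, one_pow]
  rw [show η^(2*ℓ) = (η^2)^ℓ from by rw [pow_mul]]
  have hne : ∀ n : ℕ, (a:ℝ)^n ≠ 0 := fun n => pow_ne_zero n ha'
  field_simp
  ring
end
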